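/- Let n ≥ 1, ℓ ≥ 1, and let (ε, σ) ∈ B n. Then the number of points x : Fin n → ZMod (2ℓ) fixed by the action of (ε, σ) equals 2^(o(ε,σ)) * (2ℓ)^(e(ε,σ)), where e(ε,σ) and o(ε,σ) are the numbers of even and odd orbits of σ on Fin n respectively. (Equivalently, the character of the permutation representation ℂ[(ℤ/(2ℓ)ℤ)^n] of B n at (ε, σ) equals 2^(o(ε,σ)) * (2ℓ)^(e(ε,σ)).) -/

import Mathlib

/-! Common setup: the signed symmetric group `B n` as a semidirect product,
its action on `Fin n → ZMod m`, and the inclusion `B n →* B (n+1)`. -/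

/-- The additive automorphism of sign vectors induced by a permutation:
`ε ↦ ε ∘ σ⁻¹`. -/
def signAddAut (n : ℕ) (σ : Equiv.Perm (Fin n)) :
    (Fin n → ZMod 2) ≃+ (Fin n → ZMod 2) :=
  { Equiv.arrowCongr σ (Equiv.refl (ZMod 2)) with
    map_add' := fun _ _ => rfl }

/-- The action of permutations on sign vectors, as a homomorphism to the
automorphism group of `Multiplicative (Fin n → ZMod 2)`. -/
def bSignHom (n : ℕ) :
    Equiv.Perm (Fin n) →* MulAut (Multiplicative (Fin n → ZMod 2)) where
  toFun σ := AddEquiv.toMultiplicative (signAddAut n σ)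
  map_one' := by ext ε; rfl
  map_mul' σ τ := by ext ε; rfl

/-- The signed symmetric group on `n` letters, modelled as the semidirect
product `(Fin n → ZMod 2) ⋊ Equiv.Perm (Fin n)`, where a permutation acts
on sign vectors by `σ • ε = ε ∘ σ⁻¹`. -/
abbrev B (n : ℕ) :=
  Multiplicative (Fin n → ZMod 2) ⋊[bSignHom n] Equiv.Perm (Fin n)

lemma neg_one_pow_val_add {M : Type*} [Monoid M] [HasDistribNeg M] (a b : ZMod 2) :
    (-1 : M) ^ (a + b).val = (-1 : M) ^ a.val * (-1 : M) ^ b.val := by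
  fin_cases a <;> fin_cases b
  · show (-1 : M) ^ 0 = (-1 : M) ^ 0 * (-1 : M) ^ 0
    simp
  · show (-1 : M) ^ 1 = (-1 : M) ^ 0 * (-1 : M) ^ 1
    simp
  · show (-1 : M) ^ 1 = (-1 : M) ^ 1 * (-1 : M) ^ 0
    simp
  · show (-1 : M) ^ 0 = (-1 : M) ^ 1 * (-1 : M) ^ 1
    simp

/-- The action of `B n` on `Fin n → ZMod m`: permute coordinates and negate
the coordinates with sign `1`, i.e. `((ε,σ) • x) i = (-1)^(ε i).val * x (σ⁻¹ i)`. -/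
instance BAct (n m : ℕ) : MulAction (B n) (Fin n → ZMod m) where
  smul g x := fun i =>
    (-1 : ZMod m) ^ (Multiplicative.toAdd g.left i).val * x (g.right⁻¹ i)
  one_smul x := by
    funext i
    show (-1 : ZMod m) ^ ((0 : ZMod 2)).val * x i = x i
    simp
  mul_smul g h x := by
    funext i
    show (-1 : ZMod m) ^ ((Multiplicative.toAdd g.left i)
        + (Multiplicative.toAdd h.left (g.right⁻¹ i))).val
        * x (h.right⁻¹ (g.right⁻¹ i))
      = (-1 : ZMod m) ^ (Multiplicative.toAdd g.left i).val
        * ((-1 : ZMod m) ^ (Multiplicative.toAdd h.left (g.right⁻¹ i)).val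
          * x (h.right⁻¹ (g.right⁻¹ i)))
    rw [neg_one_pow_val_add, mul_assoc]

lemma bact_smul_def {n m : ℕ} (g : B n) (x : Fin n → ZMod m) (i : Fin n) :
    (g • x) i = (-1 : ZMod m) ^ (Multiplicative.toAdd g.left i).val * x (g.right⁻¹ i) :=
  rfl

/-- Extension of a permutation of `Fin n` to `Fin (n+1)`, fixing the last letter. -/
def extendPermEquiv {n : ℕ} (σ : Equiv.Perm (Fin n)) : Equiv.Perm (Fin (n + 1)) where
  toFun := Fin.snoc (fun i => Fin.castSucc (σ i)) (Fin.last n)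
  invFun := Fin.snoc (fun i => Fin.castSucc (σ⁻¹ i)) (Fin.last n)
  left_inv j := by
    induction j using Fin.lastCases with
    | last => simp
    | cast i => simp
  right_inv j := by
    induction j using Fin.lastCases with
    | last => simp
    | cast i => simp

@[simp] lemma extendPermEquiv_castSucc {n : ℕ} (σ : Equiv.Perm (Fin n)) (i : Fin n) :
    extendPermEquiv σ (Fin.castSucc i) = Fin.castSucc (σ i) := by
  simp [extendPermEquiv]

@[simp] lemma extendPermEquiv_last {n : ℕ} (σ : Equiv.Perm (Fin n)) :
    extendPermEquiv σ (Fin.last n) = Fin.last n := by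
  simp [extendPermEquiv]

@[simp] lemma extendPermEquiv_inv {n : ℕ} (σ : Equiv.Perm (Fin n)) :
    (extendPermEquiv σ)⁻¹ = extendPermEquiv σ⁻¹ := by
  refine Equiv.ext fun j => ?_
  rw [Equiv.Perm.inv_def, Equiv.symm_apply_eq]
  induction j using Fin.lastCases with
  | last => simp
  | cast i => simp

@[simp] lemma extendPermEquiv_symm_castSucc {n : ℕ} (σ : Equiv.Perm (Fin n)) (i : Fin n) :
    (extendPermEquiv σ).symm (Fin.castSucc i) = Fin.castSucc (σ.symm i) := by
  rw [Equiv.symm_apply_eq]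
  simp [Equiv.Perm.inv_def]

@[simp] lemma extendPermEquiv_symm_last {n : ℕ} (σ : Equiv.Perm (Fin n)) :
    (extendPermEquiv σ).symm (Fin.last n) = Fin.last n := by
  rw [Equiv.symm_apply_eq]
  simp

/-- The embedding `Equiv.Perm (Fin n) →* Equiv.Perm (Fin (n+1))` extending
a permutation by the identity on the last letter. -/
def extendPerm (n : ℕ) : Equiv.Perm (Fin n) →* Equiv.Perm (Fin (n + 1)) where
  toFun := extendPermEquiv
  map_one' := by
    ext j
    induction j using Fin.lastCases with
    | last => simp
    | cast i => simp
  map_mul' σ τ := by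
    ext j
    induction j using Fin.lastCases with
    | last => simp
    | cast i => simp

/-- The inclusion `B n →* B (n+1)`: extend the sign vector by `0` in the last
coordinate and the permutation by the identity on the last letter. -/
def ιB (n : ℕ) : B n →* B (n + 1) where
  toFun g :=
    ⟨Multiplicative.ofAdd
      (Fin.snoc (Multiplicative.toAdd g.left) 0 : Fin (n + 1) → ZMod 2), extendPerm n g.right⟩
  map_one' := by
    refine SemidirectProduct.ext ?_ ?_
    · show Multiplicative.ofAdd
          (Fin.snoc (0 : Fin n → ZMod 2) (0 : ZMod 2) : Fin (n + 1) → ZMod 2) = 1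
      have h : (Fin.snoc (0 : Fin n → ZMod 2) (0 : ZMod 2) : Fin (n + 1) → ZMod 2) = 0 := by
        funext j
        induction j using Fin.lastCases with
        | last => simp
        | cast i => simp
      rw [h]; rfl
    · show extendPerm n 1 = 1
      exact map_one _
  map_mul' g h := by
    refine SemidirectProduct.ext ?_ ?_
    · show Multiplicative.ofAdd
          (Fin.snoc (Multiplicative.toAdd ((g * h).left)) 0 : Fin (n + 1) → ZMod 2) = _
      have key : (Fin.snoc (Multiplicative.toAdd ((g * h).left)) 0 : Fin (n + 1) → ZMod 2)
          = (Fin.snoc (Multiplicative.toAdd g.left) 0 : Fin (n + 1) → ZMod 2)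
            + (Fin.snoc (Multiplicative.toAdd h.left) 0 : Fin (n + 1) → ZMod 2)
              ∘ ⇑((extendPermEquiv g.right)⁻¹) := by
        funext j
        induction j using Fin.lastCases with
        | last => simp
        | cast i =>
          show (Fin.snoc (Multiplicative.toAdd g.left
              + (Multiplicative.toAdd h.left) ∘ ⇑(g.right⁻¹)) 0
              : Fin (n + 1) → ZMod 2) i.castSucc = _
          simp [Equiv.Perm.inv_def]
      rw [key]; rfl
    · show extendPerm n (g * h).right = _
      exact map_mul (extendPerm n) g.right h.right

/-- The orbits of (the cyclic subgroup generated by) a permutation `σ` of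
`Fin n`, as finsets; `j` lies in the orbit of `i` iff `σ.SameCycle i j`, i.e.
iff `(σ ^ z) i = j` for some integer `z`.  Singleton orbits (fixed points of
`σ`) are included. -/
def orbitsOf {n : ℕ} (σ : Equiv.Perm (Fin n)) : Finset (Finset (Fin n)) :=
  Finset.univ.image fun i => Finset.univ.filter fun j => σ.SameCycle i j

/-- The number of orbits `O` of `σ` on `Fin n` that are even, i.e. with
`∑ j ∈ O, ε j = 0` in `ZMod 2`. -/
def evenOrbitCount {n : ℕ} (ε : Fin n → ZMod 2) (σ : Equiv.Perm (Fin n)) : ℕ :=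
  ((orbitsOf σ).filter fun O => (∑ j ∈ O, ε j) = 0).card

/-- The number of orbits `O` of `σ` on `Fin n` that are odd, i.e. with
`∑ j ∈ O, ε j ≠ 0` in `ZMod 2`. -/
def oddOrbitCount {n : ℕ} (ε : Fin n → ZMod 2) (σ : Equiv.Perm (Fin n)) : ℕ :=
  ((orbitsOf σ).filter fun O => (∑ j ∈ O, ε j) ≠ 0).card



lemma neg_one_pow_val_add' {M : Type*} [Monoid M] [HasDistribNeg M] (a b : ZMod 2) :
    (-1 : M) ^ (a + b).val = (-1 : M) ^ a.val * (-1 : M) ^ b.val := by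
  fin_cases a <;> fin_cases b
  · show (-1 : M) ^ 0 = (-1 : M) ^ 0 * (-1 : M) ^ 0
    simp
  · show (-1 : M) ^ 1 = (-1 : M) ^ 0 * (-1 : M) ^ 1
    simp
  · show (-1 : M) ^ 1 = (-1 : M) ^ 1 * (-1 : M) ^ 0
    simp
  · show (-1 : M) ^ 0 = (-1 : M) ^ 1 * (-1 : M) ^ 1
    simp

namespace CFE
variable {n : ℕ} (σ : Equiv.Perm (Fin n))

/-- Orbit of `i` under `σ` as a finset. -/
def orbF (i : Fin n) : Finset (Fin n) := Finset.univ.filter fun j => σ.SameCycle i j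

lemma mem_orbF {i j : Fin n} : j ∈ orbF σ i ↔ σ.SameCycle i j := by
  simp [orbF]

lemma orbF_eq_of_sameCycle {i j : Fin n} (h : σ.SameCycle i j) : orbF σ i = orbF σ j := by
  ext k; simp only [mem_orbF]
  exact ⟨fun hk => h.symm.trans hk, fun hk => h.trans hk⟩

lemma self_mem_orbF (i : Fin n) : i ∈ orbF σ i := (mem_orbF σ).2 (Equiv.Perm.SameCycle.refl σ i)

/-- Canonical representative: minimum of the orbit. -/
def rep (i : Fin n) : Fin n := (orbF σ i).min' ⟨i, self_mem_orbF σ i⟩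

lemma sameCycle_rep (i : Fin n) : σ.SameCycle i (rep σ i) :=
  (mem_orbF σ).1 ((orbF σ i).min'_mem _)

lemma rep_eq_of_sameCycle {i j : Fin n} (h : σ.SameCycle i j) : rep σ i = rep σ j := by
  unfold rep; congr 1; exact orbF_eq_of_sameCycle σ h

lemma rep_rep (i : Fin n) : rep σ (rep σ i) = rep σ i :=
  (rep_eq_of_sameCycle σ (sameCycle_rep σ i)).symm

lemma orbF_rep (i : Fin n) : orbF σ (rep σ i) = orbF σ i :=
  (orbF_eq_of_sameCycle σ (sameCycle_rep σ i)).symm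

/-- period of i -/
noncomputable def per (i : Fin n) : ℕ := Function.minimalPeriod σ i

lemma isPeriodic (i : Fin n) [NeZero n] : i ∈ Function.periodicPts σ := by
  refine ⟨orderOf σ, orderOf_pos σ, ?_⟩
  show (⇑σ)^[orderOf σ] i = i
  rw [← Equiv.Perm.coe_pow, pow_orderOf_eq_one]; rfl

lemma per_pos (i : Fin n) [NeZero n] : 0 < per σ i :=
  Function.minimalPeriod_pos_of_mem_periodicPts (isPeriodic σ i)

lemma pow_per (i : Fin n) : (σ ^ per σ i) i = i := by
  rw [Equiv.Perm.coe_pow]; exact Function.iterate_minimalPeriod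

lemma pow_mod_per (i : Fin n) (k : ℕ) : (σ ^ (k % per σ i)) i = (σ ^ k) i := by
  rw [Equiv.Perm.coe_pow, Equiv.Perm.coe_pow]; exact Function.iterate_mod_minimalPeriod_eq

lemma pow_inj_per {i : Fin n} {a b : ℕ} (ha : a < per σ i) (hb : b < per σ i)
    (h : (σ ^ a) i = (σ ^ b) i) : a = b := by
  refine Function.iterate_injOn_Iio_minimalPeriod ha hb ?_
  show (⇑σ)^[a] i = (⇑σ)^[b] i
  rwa [← Equiv.Perm.coe_pow, ← Equiv.Perm.coe_pow]

lemma per_dvd_of_pow_eq {i : Fin n} {d : ℕ} (h : (σ ^ d) i = i) : per σ i ∣ d := by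
  refine Function.IsPeriodicPt.minimalPeriod_dvd ?_
  show (⇑σ)^[d] i = i
  rwa [← Equiv.Perm.coe_pow]

lemma orbF_eq_image (i : Fin n) [NeZero n] :
    orbF σ i = (Finset.range (per σ i)).image (fun t => (σ ^ t) i) := by
  ext j
  simp only [mem_orbF, Finset.mem_image, Finset.mem_range]
  constructor
  · rintro h
    obtain ⟨k, -, rfl⟩ := h.exists_pow_eq'
    exact ⟨k % per σ i, Nat.mod_lt _ (per_pos σ i), pow_mod_per σ i k⟩
  · rintro ⟨t, -, rfl⟩
    exact ⟨(t : ℤ), by rw [zpow_natCast]⟩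



lemma prod_neg_one_pow_val {α M : Type*} [CommMonoid M] [HasDistribNeg M] [DecidableEq α]
    (S : Finset α) (f : α → ZMod 2) :
    ∏ j ∈ S, ((-1 : M) ^ (f j).val) = (-1 : M) ^ (∑ j ∈ S, f j).val := by
  induction S using Finset.induction with
  | empty => simp [show ((0 : ZMod 2)).val = 0 from rfl]
  | @insert a s h ih =>
    rw [Finset.prod_insert h, Finset.sum_insert h, neg_one_pow_val_add', ih]

end CFE

namespace CFE
variable {n m : ℕ} (σ : Equiv.Perm (Fin n)) (ε : Fin n → ZMod 2)

/-- the sign attached to letter `j` -/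
def sg (j : Fin n) : ZMod m := (-1 : ZMod m) ^ (ε j).val

lemma isUnit_sg (j : Fin n) : IsUnit (sg (m := m) ε j) := by
  unfold sg; exact (IsUnit.neg isUnit_one).pow _

/-- orbit sign product -/
def P (r : Fin n) : ZMod m := ∏ j ∈ orbF σ r, sg (m := m) ε j

lemma P_eq (r : Fin n) :
    P σ ε r = (-1 : ZMod m) ^ (∑ j ∈ orbF σ r, ε j).val :=
  prod_neg_one_pow_val _ _

/-- offset-invariant one-period product -/
lemma prod_period (r : Fin n) [NeZero n] (u : ℕ) :
    ∏ t ∈ Finset.range (per σ r), sg (m := m) ε ((σ ^ (u + t)) r) = P σ ε r := by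
  induction u with
  | zero =>
    unfold P
    rw [orbF_eq_image]
    rw [Finset.prod_image ?inj]
    · simp
    · intro a ha b hb hab
      exact pow_inj_per σ (Finset.mem_range.1 ha) (Finset.mem_range.1 hb) hab
  | succ u ih =>
    have key : ∀ v : ℕ, ∏ t ∈ Finset.range (per σ r + 1), sg (m := m) ε ((σ ^ (v + t)) r)
        = (∏ t ∈ Finset.range (per σ r), sg (m := m) ε ((σ ^ (v + t)) r)) * sg (m := m) ε ((σ ^ v) r) := by
      intro v
      rw [Finset.prod_range_succ]
      congr 1
      have : (σ ^ (v + per σ r)) r = (σ ^ v) r := by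
        rw [pow_add, Equiv.Perm.mul_apply, pow_per]
      rw [this]
    have h1 := key u
    rw [Finset.prod_range_succ'] at h1
    -- h1 : (∏ t ∈ range (per), sg ((σ^(u + (t+1))) r)) * sg ((σ^(u+0)) r) = (∏ ...) * sg ((σ^u) r)
    have h2 : ∏ t ∈ Finset.range (per σ r), sg (m := m) ε ((σ ^ (u + 1 + t)) r)
        = ∏ t ∈ Finset.range (per σ r), sg (m := m) ε ((σ ^ (u + (t + 1))) r) := by
      exact Finset.prod_congr rfl fun t _ => by rw [show u+1+t = u+(t+1) by omega]
    rw [h2]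
    have hu : IsUnit (sg (m := m) ε ((σ ^ u) r)) := isUnit_sg ε _
    refine hu.mul_right_cancel ?_
    rw [← ih]
    simpa using h1

/-- block product -/
lemma prod_blocks (r : Fin n) [NeZero n] (u q : ℕ) :
    ∏ t ∈ Finset.range (per σ r * q), sg (m := m) ε ((σ ^ (u + t)) r) = (P σ ε r) ^ q := by
  induction q with
  | zero => simp
  | succ q ih =>
    have : per σ r * (q + 1) = per σ r * q + per σ r := by ring
    rw [this, Finset.prod_range_add, ih, pow_succ]
    congr 1
    rw [← prod_period σ ε (m := m) r (u + per σ r * q)]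
    exact Finset.prod_congr rfl fun t _ => by rw [show u + (per σ r * q + t) = u + per σ r * q + t by omega]

end CFE

namespace CFE
variable {n m : ℕ} (σ : Equiv.Perm (Fin n)) (ε : Fin n → ZMod 2)

/-- partial sign product along the cycle starting at `r` -/
def F (r : Fin n) (k : ℕ) : ZMod m := ∏ t ∈ Finset.range k, sg (m := m) ε ((σ ^ (t + 1)) r)

lemma F_zero (r : Fin n) : F σ ε (m := m) r 0 = 1 := by simp [F]

lemma F_succ (r : Fin n) (k : ℕ) :
    F σ ε (m := m) r (k + 1) = F σ ε (m := m) r k * sg (m := m) ε ((σ ^ (k + 1)) r) := by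
  rw [F, Finset.prod_range_succ]; rfl

lemma Pmul {r : Fin n} {b : ZMod m}
    (hb : (∑ j ∈ orbF σ r, ε j) ≠ 0 → b + b = 0) : P σ ε r * b = b := by
  by_cases hs : (∑ j ∈ orbF σ r, ε j) = 0
  · rw [P_eq, hs]
    simp [show ((0 : ZMod 2)).val = 0 from rfl]
  · have h1 : (∑ j ∈ orbF σ r, ε j) = 1 := by
      have h2 : ∀ a : ZMod 2, a ≠ 0 → a = 1 := by decide
      exact h2 _ hs
    rw [P_eq, h1, show ((1 : ZMod 2)).val = 1 from rfl, pow_one, neg_one_mul,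
      neg_eq_iff_add_eq_zero]
    exact hb hs

lemma Pq_mul {r : Fin n} {b : ZMod m} (h : P σ ε r * b = b) (q : ℕ) :
    (P σ ε r) ^ q * b = b := by
  induction q with
  | zero => simp
  | succ q ih => rw [pow_succ, mul_assoc, h, ih]

lemma welldef' [NeZero n] {r : Fin n} {b : ZMod m} (h : P σ ε r * b = b)
    {k k' : ℕ} (hle : k ≤ k') (hkk : (σ ^ k) r = (σ ^ k') r) :
    F σ ε (m := m) r k * b = F σ ε (m := m) r k' * b := by
  set d := k' - k with hd
  have hk' : k' = k + d := by omega
  have hper : (σ ^ d) r = r := by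
    have h1 : (σ ^ k) ((σ ^ d) r) = (σ ^ k) r := by
      rw [← Equiv.Perm.mul_apply, ← pow_add, ← hk', ← hkk]
    exact (σ ^ k).injective h1
  obtain ⟨q, hq⟩ := per_dvd_of_pow_eq σ hper
  have hF : F σ ε (m := m) r k' = F σ ε (m := m) r k
      * ∏ t ∈ Finset.range d, sg (m := m) ε ((σ ^ (k + 1 + t)) r) := by
    rw [hk', F, Finset.prod_range_add]
    congr 1
    exact Finset.prod_congr rfl fun t _ => by rw [show k + t + 1 = k + 1 + t by omega]
  rw [hF, hq, prod_blocks, mul_assoc, Pq_mul σ ε h]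

lemma welldef [NeZero n] {r : Fin n} {b : ZMod m} (h : P σ ε r * b = b)
    {k k' : ℕ} (hkk : (σ ^ k) r = (σ ^ k') r) :
    F σ ε (m := m) r k * b = F σ ε (m := m) r k' * b := by
  rcases le_total k k' with hle | hle
  · exact welldef' σ ε h hle hkk
  · exact (welldef' σ ε h hle hkk.symm).symm

lemma iter {x : Fin n → ZMod m} (hx : ∀ j, x (σ j) = sg (m := m) ε (σ j) * x j)
    (r : Fin n) (k : ℕ) : x ((σ ^ k) r) = F σ ε (m := m) r k * x r := by
  induction k with
  | zero => simp [F_zero]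
  | succ k ih =>
    have hp : (σ ^ (k + 1)) r = σ ((σ ^ k) r) := by
      rw [pow_succ']; rfl
    rw [hp, hx, ih, F_succ, hp]
    ring

end CFE

namespace CFE
variable {n m : ℕ} (σ : Equiv.Perm (Fin n)) (ε : Fin n → ZMod 2)

lemma kk_ex (j : Fin n) : ∃ k : ℕ, (σ ^ k) (rep σ j) = j := by
  obtain ⟨k, -, hk⟩ := (sameCycle_rep σ j).symm.exists_pow_eq'
  exact ⟨k, hk⟩

/-- minimal exponent carrying the representative to `j` -/
noncomputable def kk (j : Fin n) : ℕ := Nat.find (kk_ex σ j)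

lemma kk_spec (j : Fin n) : (σ ^ kk σ j) (rep σ j) = j := Nat.find_spec (kk_ex σ j)

lemma kk_rep {i : Fin n} (h : rep σ i = i) : kk σ i = 0 := by
  rw [kk, Nat.find_eq_zero]
  simpa using h

/-- the reconstruction of a fixed point from orbit data -/
noncomputable def recon
    (a : ∀ i : {i : Fin n // rep σ i = i}, {b : ZMod m // (∑ j ∈ orbF σ i.1, ε j) ≠ 0 → b + b = 0}) :
    Fin n → ZMod m :=
  fun j => F σ ε (m := m) (rep σ j) (kk σ j) * (a ⟨rep σ j, rep_rep σ j⟩).1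

lemma recon_fixed [NeZero n]
    (a : ∀ i : {i : Fin n // rep σ i = i}, {b : ZMod m // (∑ j ∈ orbF σ i.1, ε j) ≠ 0 → b + b = 0})
    (j : Fin n) :
    recon σ ε a (σ j) = sg (m := m) ε (σ j) * recon σ ε a j := by
  have hr : rep σ (σ j) = rep σ j := by
    refine (rep_eq_of_sameCycle σ ?_).symm
    exact ⟨1, by simp⟩
  set r := rep σ j with hrd
  have hPa : P σ ε r * (a ⟨r, rep_rep σ j⟩).1 = (a ⟨r, rep_rep σ j⟩).1 := by
    refine Pmul σ ε ?_
    exact (a ⟨r, rep_rep σ j⟩).2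
  have h1 : (σ ^ (kk σ j + 1)) r = σ j := by
    rw [pow_succ', Equiv.Perm.mul_apply, kk_spec]
  have h2 : (σ ^ (kk σ (σ j))) r = (σ ^ (kk σ j + 1)) r := by
    rw [h1]
    have := kk_spec σ (σ j)
    rwa [hr] at this
  unfold recon
  have hcast : (⟨rep σ (σ j), rep_rep σ (σ j)⟩ :
      {i : Fin n // rep σ i = i}) = ⟨r, rep_rep σ j⟩ := by
    exact Subtype.ext hr
  rw [hcast, hr]
  rw [welldef σ ε hPa h2, F_succ, h1]
  ring

/-- The fixed points are equivalent to the orbit data. -/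
noncomputable def fixedEquiv [NeZero n] :
    {x : Fin n → ZMod m // ∀ j, x (σ j) = sg (m := m) ε (σ j) * x j} ≃
    (∀ i : {i : Fin n // rep σ i = i}, {b : ZMod m // (∑ j ∈ orbF σ i.1, ε j) ≠ 0 → b + b = 0}) where
  toFun x := fun i => ⟨x.1 i.1, by
    intro hs
    have h1 : (∑ j ∈ orbF σ i.1, ε j) = 1 := by
      have h2 : ∀ a : ZMod 2, a ≠ 0 → a = 1 := by decide
      exact h2 _ hs
    have h3 : x.1 ((σ ^ per σ i.1) i.1) = F σ ε (m := m) i.1 (per σ i.1) * x.1 i.1 :=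
      iter σ ε x.2 i.1 (per σ i.1)
    rw [pow_per] at h3
    have h4 : F σ ε (m := m) i.1 (per σ i.1) = P σ ε i.1 := by
      rw [← prod_period σ ε (m := m) i.1 1, F]
      exact Finset.prod_congr rfl fun t _ => by rw [show t + 1 = 1 + t by omega]
    rw [h4, P_eq, h1, show ((1 : ZMod 2)).val = 1 from rfl, pow_one, neg_one_mul] at h3
    rw [eq_neg_iff_add_eq_zero] at h3
    exact h3⟩
  invFun a := ⟨recon σ ε a, recon_fixed σ ε a⟩
  left_inv x := by
    ext j
    show F σ ε (m := m) (rep σ j) (kk σ j) * x.1 (rep σ j) = x.1 j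
    rw [← iter σ ε x.2 (rep σ j) (kk σ j), kk_spec]
  right_inv a := by
    funext i
    refine Subtype.ext ?_
    show F σ ε (m := m) (rep σ i.1) (kk σ i.1) * (a ⟨rep σ i.1, rep_rep σ i.1⟩).1 = (a i).1
    rw [kk_rep σ i.2, F_zero, one_mul]
    have hcast : (⟨rep σ i.1, rep_rep σ i.1⟩ : {i : Fin n // rep σ i = i}) = i :=
      Subtype.ext i.2
    rw [hcast]

end CFE

namespace CFE

lemma two_add_self_iff (l : ℕ) (hl : 1 ≤ l) (b : ZMod (2 * l)) :
    b + b = 0 ↔ b = 0 ∨ b = (l : ZMod (2 * l)) := by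
  haveI : NeZero (2 * l) := ⟨by omega⟩
  constructor
  · intro h
    have hv : ((b.val + b.val : ℕ) : ZMod (2 * l)) = 0 := by
      push_cast
      rw [ZMod.natCast_rightInverse b]
      exact h
    rw [ZMod.natCast_eq_zero_iff] at hv
    obtain ⟨q, hq⟩ := hv
    have hlt : b.val < 2 * l := ZMod.val_lt b
    have hbv : b.val = l * q := by
      have h2 : 2 * l * q = 2 * (l * q) := by ring
      omega
    have hq2 : q < 2 := by
      rcases Nat.lt_or_ge q 2 with h | h
      · exact h
      · exfalso; nlinarith
    interval_cases q
    · left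
      rw [← ZMod.val_eq_zero]; omega
    · right
      apply ZMod.val_injective
      rw [ZMod.val_cast_of_lt (by omega : l < 2 * l)]
      omega
  · rintro (rfl | rfl)
    · simp
    · have : ((l : ZMod (2 * l))) + l = ((2 * l : ℕ) : ZMod (2 * l)) := by push_cast; ring
      rw [this, ZMod.natCast_self]

lemma card_factor (l : ℕ) (hl : 1 ≤ l) (c : Prop) [Decidable c] :
    Nat.card {b : ZMod (2 * l) // c → b + b = 0} = if c then 2 else 2 * l := by
  haveI : NeZero (2 * l) := ⟨by omega⟩
  by_cases hc : c
  · rw [if_pos hc]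
    have e : {b : ZMod (2 * l) // c → b + b = 0} ≃ {b : ZMod (2 * l) // b + b = 0} :=
      Equiv.subtypeEquivRight fun b => by tauto
    rw [Nat.card_congr e, Nat.card_eq_fintype_card, Fintype.card_subtype]
    have : (Finset.univ.filter fun b : ZMod (2 * l) => b + b = 0)
        = {0, (l : ZMod (2 * l))} := by
      ext b
      simp only [Finset.mem_filter, Finset.mem_univ, true_and, Finset.mem_insert,
        Finset.mem_singleton]
      exact two_add_self_iff l hl b
    rw [this, Finset.card_insert_of_notMem, Finset.card_singleton]
    simp only [Finset.mem_singleton]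
    intro h
    have := ZMod.val_cast_of_lt (by omega : l < 2 * l)
    rw [← h] at this
    simp [ZMod.val_zero] at this
    omega
  · rw [if_neg hc]
    have e : {b : ZMod (2 * l) // c → b + b = 0} ≃ ZMod (2 * l) :=
      Equiv.subtypeUnivEquiv fun b => by tauto
    rw [Nat.card_congr e, Nat.card_eq_fintype_card, ZMod.card]

end CFE

namespace CFE

lemma orbF_mem_orbitsOf {n : ℕ} (σ : Equiv.Perm (Fin n)) (i : Fin n) :
    orbF σ i ∈ orbitsOf σ :=
  Finset.mem_image.2 ⟨i, Finset.mem_univ i, rfl⟩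

lemma main {n : ℕ} [NeZero n] (l : ℕ) (hl : 1 ≤ l)
    (σ : Equiv.Perm (Fin n)) (ε : Fin n → ZMod 2) :
    Nat.card {x : Fin n → ZMod (2 * l) //
        ∀ j, x (σ j) = sg (m := 2 * l) ε (σ j) * x j}
      = 2 ^ oddOrbitCount ε σ * (2 * l) ^ evenOrbitCount ε σ := by
  rw [Nat.card_congr (fixedEquiv σ ε), Nat.card_pi]
  have step1 : ∀ i : {i : Fin n // rep σ i = i},
      Nat.card {b : ZMod (2 * l) // (∑ j ∈ orbF σ i.1, ε j) ≠ 0 → b + b = 0}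
        = if (∑ j ∈ orbF σ i.1, ε j) ≠ 0 then 2 else 2 * l :=
    fun i => card_factor l hl _
  rw [Finset.prod_congr rfl fun i _ => step1 i]
  have step2 : ∏ i : {i : Fin n // rep σ i = i},
        (if (∑ j ∈ orbF σ i.1, ε j) ≠ 0 then 2 else 2 * l)
      = ∏ i ∈ Finset.univ.filter (fun i : Fin n => rep σ i = i),
        (if (∑ j ∈ orbF σ i, ε j) ≠ 0 then 2 else 2 * l) := by
    rw [Finset.prod_subtype (p := fun i : Fin n => rep σ i = i)
      (Finset.univ.filter (fun i : Fin n => rep σ i = i))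
      (fun x => by simp) (fun i : Fin n => if (∑ j ∈ orbF σ i, ε j) ≠ 0 then 2 else 2 * l)]
  rw [step2]
  have step3 : ∏ i ∈ Finset.univ.filter (fun i : Fin n => rep σ i = i),
        (if (∑ j ∈ orbF σ i, ε j) ≠ 0 then 2 else 2 * l)
      = ∏ O ∈ orbitsOf σ, (if (∑ j ∈ O, ε j) ≠ 0 then 2 else 2 * l) := by
    refine Finset.prod_bij (fun a _ => orbF σ a) ?_ ?_ ?_ ?_
    · intro a _; exact orbF_mem_orbitsOf σ a
    · intro a1 ha1 a2 ha2 h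
      have h' : orbF σ a1 = orbF σ a2 := h
      have h2 : a2 ∈ orbF σ a1 := by rw [h']; exact self_mem_orbF σ a2
      have h3 : σ.SameCycle a1 a2 := (mem_orbF σ).1 h2
      have := rep_eq_of_sameCycle σ h3
      rw [Finset.mem_filter] at ha1 ha2
      rw [← ha1.2, this, ha2.2]
    · intro O hO
      obtain ⟨i0, -, rfl⟩ := Finset.mem_image.1 hO
      exact ⟨rep σ i0, Finset.mem_filter.2 ⟨Finset.mem_univ _, rep_rep σ i0⟩,
        orbF_rep σ i0⟩
    · intro a _; rfl
  rw [step3, Finset.prod_ite, Finset.prod_const, Finset.prod_const]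
  have hfe : Finset.filter (fun O => ¬ (∑ j ∈ O, ε j ≠ 0)) (orbitsOf σ)
      = Finset.filter (fun O => (∑ j ∈ O, ε j) = 0) (orbitsOf σ) := by
    apply Finset.filter_congr
    intro O _
    simp
  rw [hfe, oddOrbitCount, evenOrbitCount]

end CFE

set_option synthInstance.maxHeartbeats 1000000 in
/-- **Lemma (character of the even generalized parking space).**  For
`g = (ε, σ) ∈ B n`, the number of points of `Fin n → ZMod (2ℓ)` fixed by `g`
is `2 ^ o(ε,σ) * (2ℓ) ^ e(ε,σ)`, where `e(ε,σ)` and `o(ε,σ)` are the numbers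
of even and odd orbits of `σ` on `Fin n`. -/
theorem card_fixedPoints_even (n l : ℕ) (hn : 1 ≤ n) (hl : 1 ≤ l) (g : B n) :
    Nat.card {x : Fin n → ZMod (2 * l) // g • x = x}
      = 2 ^ oddOrbitCount (Multiplicative.toAdd g.left) g.right
        * (2 * l) ^ evenOrbitCount (Multiplicative.toAdd g.left) g.right := by
  haveI : NeZero n := ⟨by omega⟩
  have hiff : ∀ x : Fin n → ZMod (2 * l),
      g • x = x ↔ ∀ j, x (g.right j) = CFE.sg (m := 2 * l)
        (Multiplicative.toAdd g.left) (g.right j) * x j := by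
    intro x
    constructor
    · intro h j
      have h1 := congrFun h (g.right j)
      rw [bact_smul_def, show g.right⁻¹ (g.right j) = j from g.right.symm_apply_apply j] at h1
      simpa [CFE.sg] using h1.symm
    · intro h
      funext i
      have h1 := h (g.right⁻¹ i)
      rw [show g.right (g.right⁻¹ i) = i from g.right.apply_symm_apply i] at h1
      rw [bact_smul_def]
      simpa [CFE.sg] using h1.symm
  rw [Nat.card_congr (Equiv.subtypeEquivRight hiff)]
  exact CFE.main l hl g.right (Multiplicative.toAdd g.left)
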